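/- Let n, m, r be natural numbers with m < n and r + n + 1 ≤ 2m. Let α, β, γ be partial bijections of Fin n, each of rank r + 1, such that α·β, β·γ and α·β·γ all have rank r. Then there exists a partial bijection α' of Fin n of rank r + 1 with α'·γ = α·β·γ such that, in the free semigroup on the alphabet X = {μ ∈ I_n : r + 1 ≤ rank(μ) ≤ r + 2}, the pair (x_α·x_β·x_γ, x_{α'}·x_γ) lies in the congruence generated by R = {(x_μ·x_ν, x_{μν}) : r + 1 ≤ rank(μ), rank(ν), rank(μ·ν) ≤ r + 2}. -/

import Mathlib

/-- The symmetric inverse monoid on `Fin n`: partial bijections under composition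
(`α * β` means "first apply `α`, then `β`"). -/
instance (n : ℕ) : Semigroup (PEquiv (Fin n) (Fin n)) where
  mul := PEquiv.trans
  mul_assoc a b c := by
    show (a.trans b).trans c = a.trans (b.trans c)
    ext x y
    simp [PEquiv.trans, Option.bind_assoc]

/-- The rank of a partial bijection: the cardinality of its domain. -/
noncomputable def prank {n : ℕ} (a : PEquiv (Fin n) (Fin n)) : ℕ :=
  Set.ncard {x : Fin n | (a x).isSome}

namespace Stmt11Aux

attribute [local instance] Classical.propDecidable

variable {n : ℕ}

/-- domain set -/
def dset (a : PEquiv (Fin n) (Fin n)) : Set (Fin n) := {x | (a x).isSome}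
/-- image set -/
def iset (a : PEquiv (Fin n) (Fin n)) : Set (Fin n) := {y | (a.symm y).isSome}

theorem mul_apply (a b : PEquiv (Fin n) (Fin n)) (x : Fin n) :
    (a * b) x = (a x).bind b := rfl

theorem prank_def (a : PEquiv (Fin n) (Fin n)) : prank a = (dset a).ncard := rfl

theorem prank_mul (a b : PEquiv (Fin n) (Fin n)) :
    prank (a * b) = (iset a ∩ dset b).ncard := by
  have himg : (fun x => (a x).getD x) '' dset (a * b) = iset a ∩ dset b := by
    ext y
    constructor
    · rintro ⟨x, hx, rfl⟩
      have hx' : ((a x).bind b).isSome := hx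
      obtain ⟨y', hy'⟩ : ∃ y', a x = some y' := by
        cases h : a x
        · rw [h] at hx'; simp at hx'
        · exact ⟨_, rfl⟩
      have hsymm : a.symm y' = some x := a.eq_some_iff.2 hy'
      constructor
      · show (a.symm ((a x).getD x)).isSome
        rw [hy']
        simp [hsymm]
      · show (b ((a x).getD x)).isSome
        rw [hy'] at hx' ⊢
        simpa using hx'
    · rintro ⟨hy1, hy2⟩
      obtain ⟨x, hx⟩ : ∃ x, a.symm y = some x :=
        Option.isSome_iff_exists.1 hy1
      have hax : a x = some y := a.eq_some_iff.1 hx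
      refine ⟨x, ?_, ?_⟩
      · show ((a x).bind b).isSome
        rw [hax]; exact hy2
      · simp [hax]
  have hinj : Set.InjOn (fun x => (a x).getD x) (dset (a * b)) := by
    intro x1 h1 x2 h2 he
    have h1' : ((a x1).bind b).isSome := h1
    have h2' : ((a x2).bind b).isSome := h2
    obtain ⟨y1, hy1⟩ : ∃ y, a x1 = some y := by
      cases h : a x1
      · rw [h] at h1'; simp at h1'
      · exact ⟨_, rfl⟩
    obtain ⟨y2, hy2⟩ : ∃ y, a x2 = some y := by
      cases h : a x2
      · rw [h] at h2'; simp at h2'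
      · exact ⟨_, rfl⟩
    simp only [hy1, hy2, Option.getD_some] at he
    subst he
    have e1 := a.eq_some_iff.2 hy1
    have e2 := a.eq_some_iff.2 hy2
    rw [e1] at e2
    exact (Option.some_injective _ e2)
  rw [prank_def, ← himg, Set.ncard_image_of_injOn hinj]

theorem dset_refl : dset (PEquiv.refl (Fin n)) = Set.univ := by
  ext x; simp [dset]

theorem iset_ncard (a : PEquiv (Fin n) (Fin n)) : (iset a).ncard = prank a := by
  have h := prank_mul a (PEquiv.refl (Fin n))
  have h2 : a * PEquiv.refl (Fin n) = a := PEquiv.trans_refl a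
  rw [h2, dset_refl, Set.inter_univ] at h
  exact h.symm

theorem exists_iset_not_dset (a b : PEquiv (Fin n) (Fin n)) (h : prank (a * b) < prank a) :
    ∃ y, (a.symm y).isSome ∧ b y = none := by
  have hsub : dset (a * b) ⊆ dset a := by
    intro x hx
    have hx' : ((a x).bind b).isSome := hx
    cases h' : a x
    · rw [h'] at hx'; simp at hx'
    · show (a x).isSome; rw [h']; rfl
  have hne : dset (a * b) ≠ dset a := by
    intro he
    rw [prank_def, prank_def, he] at h
    omega
  obtain ⟨x, hx, hnx⟩ := Set.exists_of_ssubset (ssubset_of_subset_of_ne hsub hne)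
  obtain ⟨y, hy⟩ : ∃ y, a x = some y := by
    cases h' : a x
    · exact absurd (show (a x).isSome by exact hx) (by simp [h'])
    · exact ⟨_, rfl⟩
  refine ⟨y, ?_, ?_⟩
  · rw [a.eq_some_iff.2 hy]; rfl
  · have : ¬ ((a x).bind b).isSome := hnx
    rw [hy] at this
    simpa [Option.not_isSome_iff_eq_none] using this

/-- insert the pair (a, e) into b -/
def pins (b : PEquiv (Fin n) (Fin n)) (a e : Fin n) (ha : b a = none) (he : b.symm e = none) :
    PEquiv (Fin n) (Fin n) where
  toFun x := if x = a then some e else b x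
  invFun y := if y = e then some a else b.symm y
  inv x y := by
    show x ∈ (if y = e then some a else b.symm y) ↔ y ∈ (if x = a then some e else b x)
    by_cases hx : x = a <;> by_cases hy : y = e
    · subst hx; subst hy; simp
    · subst hx
      rw [if_neg hy, if_pos rfl]
      simp only [Option.mem_def]
      constructor
      · intro h
        have h2 := b.eq_some_iff.1 h
        rw [ha] at h2
        simp at h2
      · intro h
        injection h with h
        exact absurd h.symm hy
    · subst hy
      rw [if_pos rfl, if_neg hx]
      simp only [Option.mem_def]
      constructor
      · intro h
        injection h with h
        exact absurd h.symm hx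
      · intro h
        have h2 := b.eq_some_iff.2 h
        rw [he] at h2
        simp at h2
    · rw [if_neg hy, if_neg hx]
      exact b.mem_iff_mem

theorem pins_apply (b : PEquiv (Fin n) (Fin n)) (a e : Fin n) (ha : b a = none)
    (he : b.symm e = none) (x : Fin n) :
    pins b a e ha he x = if x = a then some e else b x := rfl

theorem dset_pins (b : PEquiv (Fin n) (Fin n)) (a e : Fin n) (ha : b a = none)
    (he : b.symm e = none) : dset (pins b a e ha he) = insert a (dset b) := by
  ext x
  by_cases hx : x = a <;> simp [dset, pins_apply, hx]

theorem prank_pins (b : PEquiv (Fin n) (Fin n)) (a e : Fin n) (ha : b a = none)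
    (he : b.symm e = none) : prank (pins b a e ha he) = prank b + 1 := by
  rw [prank_def, dset_pins, Set.ncard_insert_of_notMem (by simp [dset, ha]), prank_def]

/-- partial identity on a set -/
noncomputable def pid (s : Set (Fin n)) : PEquiv (Fin n) (Fin n) where
  toFun x := if x ∈ s then some x else none
  invFun x := if x ∈ s then some x else none
  inv x y := by
    show x ∈ (if y ∈ s then some y else none) ↔ y ∈ (if x ∈ s then some x else none)
    by_cases hx : x ∈ s <;> by_cases hy : y ∈ s
    · simp [hx, hy, eq_comm]
    · simp only [if_pos hx, if_neg hy, Option.mem_def, Option.some.injEq]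
      constructor
      · intro h; simp at h
      · intro h; exact absurd (h ▸ hx) hy
    · simp only [if_neg hx, if_pos hy, Option.mem_def, Option.some.injEq]
      constructor
      · intro h; exact absurd (h ▸ hy) hx
      · intro h; simp at h
    · simp [hx, hy]

theorem pid_apply (s : Set (Fin n)) (x : Fin n) :
    pid s x = if x ∈ s then some x else none := rfl

theorem dset_pid (s : Set (Fin n)) : dset (pid s) = s := by
  ext x
  by_cases hx : x ∈ s <;> simp [dset, pid_apply, hx]

theorem prank_pid (s : Set (Fin n)) : prank (pid s) = s.ncard := by
  rw [prank_def, dset_pid]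

theorem pins_mul_pid (b : PEquiv (Fin n) (Fin n)) (a e : Fin n) (ha : b a = none)
    (he : b.symm e = none) (s : Set (Fin n)) (hes : e ∉ s) (hbs : iset b ⊆ s) :
    pins b a e ha he * pid s = b := by
  ext x y
  rw [mul_apply]
  by_cases hx : x = a
  · subst hx
    rw [pins_apply, if_pos rfl, ha]
    simp [pid_apply, hes]
  · rw [pins_apply, if_neg hx]
    cases hbx : b x with
    | none => simp
    | some z =>
      have hz : z ∈ s := hbs (by simp [iset, b.eq_some_iff.2 hbx])
      simp [pid_apply, hz]

theorem pid_mul (s : Set (Fin n)) (c : PEquiv (Fin n) (Fin n)) (hcs : dset c ⊆ s) :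
    pid s * c = c := by
  ext x y
  rw [mul_apply, pid_apply]
  by_cases hx : x ∈ s
  · simp [hx]
  · have : c x = none := by
      by_contra h
      exact hx (hcs (by simp [dset, Option.isSome_iff_ne_none, h]))
    simp [hx, this]

theorem pins_mul (b : PEquiv (Fin n) (Fin n)) (a e : Fin n) (ha : b a = none)
    (he : b.symm e = none) (c : PEquiv (Fin n) (Fin n)) (hce : c e = none) :
    pins b a e ha he * c = b * c := by
  ext x y
  rw [mul_apply, mul_apply]
  by_cases hx : x = a
  · subst hx
    rw [pins_apply, if_pos rfl, ha]
    simp [hce]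
  · rw [pins_apply, if_neg hx]

theorem prank_mul_pins (α b : PEquiv (Fin n) (Fin n)) (a e : Fin n) (ha : b a = none)
    (he : b.symm e = none) (haα : (α.symm a).isSome) :
    prank (α * pins b a e ha he) = prank (α * b) + 1 := by
  rw [prank_mul, prank_mul, dset_pins,
    Set.inter_insert_of_mem (show a ∈ iset α from haα),
    Set.ncard_insert_of_notMem (by simp [dset, ha])]

end Stmt11Aux

open Stmt11Aux

/-- The alphabet `X_{i,m}`: partial bijections `a` with `i ≤ rank a ≤ m`. -/
abbrev IX (n m i : ℕ) : Type :=
  {a : PEquiv (Fin n) (Fin n) // i ≤ prank a ∧ prank a ≤ m}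

/-- The relations `R_{i,m}` of the restricted Cayley table presentation. -/
def IRel (n m i : ℕ) : FreeSemigroup (IX n m i) → FreeSemigroup (IX n m i) → Prop :=
  fun u v =>
    ∃ (a b : PEquiv (Fin n) (Fin n)) (ha : i ≤ prank a ∧ prank a ≤ m)
      (hb : i ≤ prank b ∧ prank b ≤ m) (hab : i ≤ prank (a * b) ∧ prank (a * b) ≤ m),
      u = FreeSemigroup.of (⟨a, ha⟩ : IX n m i) * FreeSemigroup.of ⟨b, hb⟩ ∧
      v = FreeSemigroup.of ⟨a * b, hab⟩

/-- In the symmetric inverse monoid, if `α, β, γ` have rank `r + 1` and `αβ`, `βγ`, `αβγ`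
all have rank `r`, then there is `α'` of rank `r + 1` with `α'γ = αβγ` such that
`x_α x_β x_γ = x_{α'} x_γ` is a consequence of the Cayley relations among elements of
rank `r + 1` and `r + 2` (assuming `m < n` and `r + n + 1 ≤ 2m`). -/
theorem stmt_11 (n m r : ℕ) (hm : m < n) (hr : r + n + 1 ≤ 2 * m)
    (α β γ : PEquiv (Fin n) (Fin n))
    (hα : prank α = r + 1) (hβ : prank β = r + 1) (hγ : prank γ = r + 1)
    (hαβ : prank (α * β) = r) (hβγ : prank (β * γ) = r) (hαβγ : prank (α * β * γ) = r) :
    ∃ α' : IX n (r + 2) (r + 1), prank α'.val = r + 1 ∧ α'.val * γ = α * β * γ ∧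
      conGen (IRel n (r + 2) (r + 1))
        (FreeSemigroup.of (⟨α, by omega⟩ : IX n (r + 2) (r + 1)) *
          FreeSemigroup.of (⟨β, by omega⟩ : IX n (r + 2) (r + 1)) *
          FreeSemigroup.of (⟨γ, by omega⟩ : IX n (r + 2) (r + 1)))
        (FreeSemigroup.of α' *
          FreeSemigroup.of (⟨γ, by omega⟩ : IX n (r + 2) (r + 1))) := by
  have hn3 : r + 3 ≤ n := by omega
  obtain ⟨a, haα, haβ⟩ := exists_iset_not_dset α β (by omega)
  set S : Set (Fin n) := iset β ∪ dset γ with hS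
  have hScard : S.ncard = r + 2 := by
    have h1 := Set.ncard_inter_add_ncard_union (iset β) (dset γ)
    have h2 : (iset β ∩ dset γ).ncard = r := by rw [← prank_mul]; exact hβγ
    have h3 : (iset β).ncard = r + 1 := by rw [iset_ncard]; exact hβ
    have h4 : (dset γ).ncard = r + 1 := by rw [← prank_def]; exact hγ
    rw [hS]
    omega
  have hex : ∃ e, e ∉ S := by
    by_contra h
    push_neg at h
    have huniv : S = Set.univ := Set.eq_univ_of_forall h
    rw [huniv, Set.ncard_univ, Nat.card_eq_fintype_card, Fintype.card_fin] at hScard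
    omega
  obtain ⟨e, heS⟩ := hex
  have heβ : β.symm e = none := by
    rw [← Option.not_isSome_iff_eq_none]
    intro h; exact heS (Or.inl h)
  have heγ : γ e = none := by
    rw [← Option.not_isSome_iff_eq_none]
    intro h; exact heS (Or.inr h)
  set β' := pins β a e haβ heβ with hβ'def
  have hβ'rank : prank β' = r + 2 := by rw [hβ'def, prank_pins]; omega
  have hαβ'rank : prank (α * β') = r + 1 := by
    rw [hβ'def, prank_mul_pins α β a e haβ heβ haα, hαβ]
  have hPrank : prank (pid S) = r + 2 := by rw [prank_pid, hScard]
  have hβ'P : β' * pid S = β := pins_mul_pid β a e haβ heβ S heS (fun y hy => Or.inl hy)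
  have hPγ : pid S * γ = γ := pid_mul S γ (fun x hx => Or.inr hx)
  have hβ'γ : β' * γ = β * γ := pins_mul β a e haβ heβ γ heγ
  have hα'γ : (α * β') * γ = α * β * γ := by rw [mul_assoc, hβ'γ, ← mul_assoc]
  have hA : r + 1 ≤ prank α ∧ prank α ≤ r + 2 := by omega
  have hB : r + 1 ≤ prank β ∧ prank β ≤ r + 2 := by omega
  have hC : r + 1 ≤ prank γ ∧ prank γ ≤ r + 2 := by omega
  have hBh : r + 1 ≤ prank β' ∧ prank β' ≤ r + 2 := by omega
  have hP : r + 1 ≤ prank (pid S) ∧ prank (pid S) ≤ r + 2 := by omega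
  have hab3 : r + 1 ≤ prank (α * β') ∧ prank (α * β') ≤ r + 2 := by omega
  have hab1 : r + 1 ≤ prank (β' * pid S) ∧ prank (β' * pid S) ≤ r + 2 := by
    rw [hβ'P]; omega
  have hab2 : r + 1 ≤ prank (pid S * γ) ∧ prank (pid S * γ) ≤ r + 2 := by
    rw [hPγ]; omega
  refine ⟨⟨α * β', hab3⟩, hαβ'rank, hα'γ, ?_⟩
  have h1 : conGen (IRel n (r + 2) (r + 1))
      (FreeSemigroup.of (⟨β', hBh⟩ : IX n (r+2) (r+1)) * FreeSemigroup.of ⟨pid S, hP⟩)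
      (FreeSemigroup.of (⟨β, hB⟩ : IX n (r+2) (r+1))) := by
    have h : conGen (IRel n (r + 2) (r + 1))
        (FreeSemigroup.of (⟨β', hBh⟩ : IX n (r+2) (r+1)) * FreeSemigroup.of ⟨pid S, hP⟩)
        (FreeSemigroup.of (⟨β' * pid S, hab1⟩ : IX n (r+2) (r+1))) :=
      ConGen.Rel.of _ _ ⟨β', pid S, hBh, hP, hab1, rfl, rfl⟩
    have hBeq : (⟨β' * pid S, hab1⟩ : IX n (r+2) (r+1)) = ⟨β, hB⟩ := Subtype.ext hβ'P
    rwa [hBeq] at h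
  have h2 : conGen (IRel n (r + 2) (r + 1))
      (FreeSemigroup.of (⟨pid S, hP⟩ : IX n (r+2) (r+1)) * FreeSemigroup.of ⟨γ, hC⟩)
      (FreeSemigroup.of (⟨γ, hC⟩ : IX n (r+2) (r+1))) := by
    have h : conGen (IRel n (r + 2) (r + 1))
        (FreeSemigroup.of (⟨pid S, hP⟩ : IX n (r+2) (r+1)) * FreeSemigroup.of ⟨γ, hC⟩)
        (FreeSemigroup.of (⟨pid S * γ, hab2⟩ : IX n (r+2) (r+1))) :=
      ConGen.Rel.of _ _ ⟨pid S, γ, hP, hC, hab2, rfl, rfl⟩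
    have hCeq : (⟨pid S * γ, hab2⟩ : IX n (r+2) (r+1)) = ⟨γ, hC⟩ := Subtype.ext hPγ
    rwa [hCeq] at h
  have h3 : conGen (IRel n (r + 2) (r + 1))
      (FreeSemigroup.of (⟨α, hA⟩ : IX n (r+2) (r+1)) * FreeSemigroup.of ⟨β', hBh⟩)
      (FreeSemigroup.of (⟨α * β', hab3⟩ : IX n (r+2) (r+1))) :=
    ConGen.Rel.of _ _ (⟨α, β', hA, hBh, hab3, rfl, rfl⟩ :
      IRel n (r + 2) (r + 1)
        (FreeSemigroup.of (⟨α, hA⟩ : IX n (r+2) (r+1)) * FreeSemigroup.of ⟨β', hBh⟩)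
        (FreeSemigroup.of (⟨α * β', hab3⟩ : IX n (r+2) (r+1))))
  have s1 : conGen (IRel n (r + 2) (r + 1))
      (FreeSemigroup.of (⟨α, hA⟩ : IX n (r+2) (r+1)) * FreeSemigroup.of ⟨β, hB⟩ *
        FreeSemigroup.of ⟨γ, hC⟩)
      (FreeSemigroup.of (⟨α, hA⟩ : IX n (r+2) (r+1)) *
        (FreeSemigroup.of (⟨β', hBh⟩ : IX n (r+2) (r+1)) * FreeSemigroup.of ⟨pid S, hP⟩) *
        FreeSemigroup.of ⟨γ, hC⟩) :=
    Con.mul _ (Con.mul _ (Con.refl _ _) (Con.symm _ h1)) (Con.refl _ _)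
  have s2 : (FreeSemigroup.of (⟨α, hA⟩ : IX n (r+2) (r+1)) *
        (FreeSemigroup.of (⟨β', hBh⟩ : IX n (r+2) (r+1)) * FreeSemigroup.of ⟨pid S, hP⟩) *
        FreeSemigroup.of ⟨γ, hC⟩) =
      (FreeSemigroup.of (⟨α, hA⟩ : IX n (r+2) (r+1)) * FreeSemigroup.of ⟨β', hBh⟩) *
        (FreeSemigroup.of (⟨pid S, hP⟩ : IX n (r+2) (r+1)) * FreeSemigroup.of ⟨γ, hC⟩) := by
    rw [mul_assoc, mul_assoc, mul_assoc]
  have s3 : conGen (IRel n (r + 2) (r + 1))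
      ((FreeSemigroup.of (⟨α, hA⟩ : IX n (r+2) (r+1)) * FreeSemigroup.of ⟨β', hBh⟩) *
        (FreeSemigroup.of (⟨pid S, hP⟩ : IX n (r+2) (r+1)) * FreeSemigroup.of ⟨γ, hC⟩))
      (FreeSemigroup.of (⟨α * β', hab3⟩ : IX n (r+2) (r+1)) * FreeSemigroup.of ⟨γ, hC⟩) :=
    Con.mul _ h3 h2
  exact Con.trans _ s1 (s2 ▸ s3)
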